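/- Let f be differentiable with L-Lipschitz gradient, g : ℝ^n → ℝ convex, and 0 < s ≤ α with Ls < 1. With y = prox_{sg}(x - s∇f(x)) and x⁺ = prox_{αg}(x - α∇f(y)), one has ‖x⁺ - y‖ ≤ (1/(1 - Ls) - s/α)‖x - x⁺‖. -/

import Mathlib

set_option maxHeartbeats 1000000

open scoped RealInnerProductSpace

/-- Scalar core inequality. -/
lemma scalar_core (m r D A B c : ℝ) (hm0 : 0 ≤ m) (hm1 : m < 1) (hr0 : 0 < r) (hr1 : r < 1)
    (hD : 0 ≤ D) (hA : 0 ≤ A) (hB : 0 ≤ B) (hc1 : c ≤ D * B) (hc2 : -(D * B) ≤ c)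
    (hA2 : A ^ 2 = B ^ 2 + D ^ 2 - 2 * c) (hkey : D ^ 2 ≤ m * c + r * D * A) :
    D * (1 - r) ≤ (m * (1 - r) + r) * B := by
  by_contra hcon
  push_neg at hcon
  have hr1' : 0 < 1 - r := by linarith
  have hRHS : 0 ≤ (m * (1 - r) + r) * B := by
    have : 0 ≤ m * (1 - r) + r := by nlinarith
    exact mul_nonneg this hB
  have hDpos : 0 < D := by nlinarith
  have hT1 : A ≤ B + D := by nlinarith [hA2, hc2]
  have hT2 : D ≤ A + B := by nlinarith [hA2, hc1]
  have hT3 : B ≤ A + D := by nlinarith [hA2, hc1]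
  have hq2 : m * A ^ 2 + (2 - m) * D ^ 2 - 2 * r * D * A ≤ m * B ^ 2 := by
    have hmc : m * (2 * c) = m * (B ^ 2 + D ^ 2 - A ^ 2) := by
      rw [show 2 * c = B ^ 2 + D ^ 2 - A ^ 2 by linarith]
    nlinarith [hkey, hmc]
  rcases le_or_gt (m * (D + B)) (r * D) with h1 | h1
  · -- minimum of q at right endpoint A = D + B
    have f2 : 0 ≤ 2 * r * D - m * (A + D + B) := by
      nlinarith [mul_le_mul_of_nonneg_left hT1 hm0]
    have pos3 : 0 < (1 - r) * D + (m - r) * B := by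
      nlinarith [mul_nonneg (mul_nonneg hm0 hB) (show (0:ℝ) ≤ 2 - r by linarith)]
    nlinarith [mul_nonneg (show (0:ℝ) ≤ D + B - A by linarith) f2, mul_pos hDpos pos3, hq2]
  rcases le_or_gt ((m + r) * D) (m * B) with h2 | h2
  · -- q increasing on interval, min at A = B - D
    have f1 : 0 ≤ A - (B - D) := by linarith
    have f2 : 0 ≤ m * (A + B - D) - 2 * r * D := by
      nlinarith [mul_le_mul_of_nonneg_left (show B - D ≤ A by linarith) hm0]
    have pos3 : (m + r) * B < (1 + r) * D := by
      nlinarith [mul_nonneg (mul_nonneg hm0 hB) (mul_nonneg hr0.le hr1'.le),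
        mul_nonneg (mul_nonneg hr0.le hr0.le) hB]
    nlinarith [mul_nonneg f1 f2,
      mul_pos hDpos (show (0:ℝ) < (1 + r) * D - (m + r) * B by linarith), hq2]
  rcases le_or_gt (m * B) ((m - r) * D) with h3 | h3
  · -- min at A = D - B
    have f1 : 0 ≤ A - (D - B) := by linarith
    have f2 : 0 ≤ m * (A + D - B) - 2 * r * D := by
      nlinarith [mul_le_mul_of_nonneg_left (show D - B ≤ A by linarith) hm0]
    have pos3 : (m - r) * B < (1 - r) * D := by
      nlinarith [mul_nonneg hB (show (0:ℝ) ≤ r * (2 - m) by nlinarith)]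
    nlinarith [mul_nonneg f1 f2,
      mul_pos hDpos (show (0:ℝ) < (1 - r) * D - (m - r) * B by linarith), hq2]
  · -- interior minimum case
    have hm0' : 0 < m := by nlinarith
    have hrm : r ^ 2 < m := by
      nlinarith [h1, mul_lt_mul_of_pos_left hcon hr0, add_nonneg hD hB,
        mul_nonneg (mul_nonneg (mul_nonneg hr0.le hm0) hr1'.le) hB]
    have h2m : 0 < 2 * m - m ^ 2 - r ^ 2 := by
      nlinarith [mul_nonneg (show (0:ℝ) ≤ 1 - m by linarith) hm0]
    have hq3 : (2 * m - m ^ 2 - r ^ 2) * D ^ 2 ≤ m ^ 2 * B ^ 2 := by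
      nlinarith [sq_nonneg (m * A - r * D), mul_le_mul_of_nonneg_left hq2 hm0]
    have hG : m * (m + r) * (1 - r) ≤ (2 * m - m ^ 2 - r ^ 2) * (m * (1 - r) + r) := by
      nlinarith [sq_nonneg (m - r), sq_nonneg (m + r), sq_nonneg (m - r ^ 2), sq_nonneg (1 - m),
        sq_nonneg (1 - r), mul_pos hr0 hr1', mul_pos hr0 hr0, sq_nonneg (m * (1 - r) + r),
        mul_pos (sub_pos.2 hrm) hr0, mul_nonneg (sub_pos.2 hrm).le hr1'.le,
        mul_nonneg (sub_pos.2 hrm).le (sub_pos.2 hm1).le]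
    have hB2 : 0 < m ^ 2 * B ^ 2 := lt_of_lt_of_le (mul_pos h2m (pow_pos hDpos 2)) hq3
    have hBne : B ≠ 0 := by intro h; rw [h] at hB2; simp at hB2
    have hBpos : 0 < B := lt_of_le_of_ne hB (Ne.symm hBne)
    have hmB : 0 < m * B := mul_pos hm0' hBpos
    have hP1 : 0 ≤ m * (1 - r) + r := by nlinarith
    have pr0 := mul_le_mul_of_nonneg_left hq3 hP1
    have pr1 := mul_lt_mul_of_pos_right (mul_lt_mul_of_pos_left hcon hm0') hmB
    have pr2 := mul_lt_mul_of_pos_right h2 (show (0:ℝ) < m * (1 - r) * D by positivity)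
    have pr3 := mul_le_mul_of_nonneg_right hG (sq_nonneg D)
    nlinarith [pr0, pr1, pr2, pr3]

/-- Subgradient inequality from the prox minimization property. -/
lemma prox_sub (n : ℕ) (g : EuclideanSpace ℝ (Fin n) → ℝ) (hg : ConvexOn ℝ Set.univ g)
    (t : ℝ) (ht : 0 < t) (u z w : EuclideanSpace ℝ (Fin n))
    (hz : ∀ v, g z + ‖z - u‖ ^ 2 / (2 * t) ≤ g v + ‖v - u‖ ^ 2 / (2 * t)) :
    g z * t ≤ g w * t + ⟪z - u, w - z⟫ := by
  have h2t : (0:ℝ) < 2 * t := by linarith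
  have hz' : ∀ v, g z * (2 * t) + ‖z - u‖ ^ 2 ≤ g v * (2 * t) + ‖v - u‖ ^ 2 := by
    intro v
    have h := mul_le_mul_of_nonneg_left (hz v) h2t.le
    rw [mul_add, mul_add, mul_div_cancel₀ _ (ne_of_gt h2t), mul_div_cancel₀ _ (ne_of_gt h2t)] at h
    linarith
  set K : ℝ := ‖w - z‖ ^ 2 / 2 with hKdef
  have hK0 : 0 ≤ K := by positivity
  have key : ∀ τ : ℝ, 0 < τ → τ ≤ 1 → g z * t ≤ g w * t + ⟪z - u, w - z⟫ + τ * K := by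
    intro τ h0 h1
    have hconv := hg.2 (Set.mem_univ z) (Set.mem_univ w)
      (show (0:ℝ) ≤ 1 - τ by linarith) h0.le (by ring)
    simp only [smul_eq_mul] at hconv
    have hzv := hz' ((1 - τ) • z + τ • w)
    have hexp : ‖((1 - τ) • z + τ • w) - u‖ ^ 2
        = ‖z - u‖ ^ 2 + 2 * τ * ⟪z - u, w - z⟫ + τ ^ 2 * ‖w - z‖ ^ 2 := by
      have hv : ((1 - τ) • z + τ • w) - u = (z - u) + τ • (w - z) := by
        rw [sub_smul, one_smul, smul_sub]; abel
      rw [hv, norm_add_sq_real, real_inner_smul_right, norm_smul]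
      simp only [Real.norm_eq_abs, mul_pow, sq_abs]
      ring
    rw [hexp] at hzv
    have hconv' := mul_le_mul_of_nonneg_left hconv h2t.le
    rw [show K = ‖w - z‖ ^ 2 / 2 from hKdef]
    refine (mul_le_mul_iff_right₀ h0).mp ?_
    nlinarith [hzv, hconv']
  refine le_of_forall_pos_le_add ?_
  intro ε hε
  by_cases hKε : K ≤ ε
  · have := key 1 one_pos le_rfl
    linarith
  · push_neg at hKε
    have hKpos : 0 < K := lt_trans hε hKε
    have := key (ε / K) (div_pos hε hKpos) (by rw [div_le_one hKpos]; linarith)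
    rw [div_mul_cancel₀ _ (ne_of_gt hKpos)] at this
    linarith

theorem xp_y_bound (n : ℕ) (L : ℝ) (hL : 0 < L)
    (f : EuclideanSpace ℝ (Fin n) → ℝ) (f' : EuclideanSpace ℝ (Fin n) → EuclideanSpace ℝ (Fin n))
    (hf : ∀ x, HasGradientAt f (f' x) x)
    (hlip : ∀ x y, ‖f' x - f' y‖ ≤ L * ‖x - y‖)
    (g : EuclideanSpace ℝ (Fin n) → ℝ) (hg : ConvexOn ℝ Set.univ g)
    (s α : ℝ) (hs : 0 < s) (hsα : s ≤ α) (hsL : L * s < 1)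
    (x y xp : EuclideanSpace ℝ (Fin n))
    (hy : ∀ w, g y + ‖y - (x - s • f' x)‖ ^ 2 / (2 * s) ≤ g w + ‖w - (x - s • f' x)‖ ^ 2 / (2 * s))
    (hxp : ∀ w, g xp + ‖xp - (x - α • f' y)‖ ^ 2 / (2 * α) ≤ g w + ‖w - (x - α • f' y)‖ ^ 2 / (2 * α)) :
    ‖xp - y‖ ≤ (1 / (1 - L * s) - s / α) * ‖x - xp‖ := by
  have hα : (0:ℝ) < α := lt_of_lt_of_le hs hsα
  have hgy := prox_sub n g hg s hs (x - s • f' x) y xp hy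
  have hgxp := prox_sub n g hg α hα (x - α • f' y) xp y hxp
  have hsum : (0:ℝ) ≤ α * ⟪y - (x - s • f' x), xp - y⟫ + s * ⟪xp - (x - α • f' y), y - xp⟫ := by
    nlinarith [mul_le_mul_of_nonneg_left hgy hα.le, mul_le_mul_of_nonneg_left hgxp hs.le]
  have hI1 : ⟪y - (x - s • f' x), xp - y⟫
      = -(⟪y - xp, y - xp⟫ - ⟪x - xp, y - xp⟫) - s * ⟪f' x, y - xp⟫ := by
    rw [show y - (x - s • f' x) = (y - x) + s • f' x from by abel,
        show xp - y = -(y - xp) from by abel,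
        inner_neg_right, inner_add_left, real_inner_smul_left,
        show y - x = (y - xp) - (x - xp) from by abel, inner_sub_left]
    ring
  have hI2 : ⟪xp - (x - α • f' y), y - xp⟫
      = -⟪x - xp, y - xp⟫ + α * ⟪f' y, y - xp⟫ := by
    rw [show xp - (x - α • f' y) = -(x - xp) + α • f' y from by abel,
        inner_add_left, inner_neg_left, real_inner_smul_left]
  rw [hI1, hI2] at hsum
  have hDsq : ⟪y - xp, y - xp⟫ = ‖xp - y‖ ^ 2 := by
    rw [real_inner_self_eq_norm_sq, norm_sub_rev]
  rw [hDsq] at hsum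
  have hCS : ⟪f' y, y - xp⟫ - ⟪f' x, y - xp⟫ ≤ L * ‖x - y‖ * ‖xp - y‖ := by
    have h1 : ⟪f' y - f' x, y - xp⟫ ≤ ‖f' y - f' x‖ * ‖y - xp‖ := real_inner_le_norm _ _
    have h2 : ‖f' y - f' x‖ * ‖y - xp‖ ≤ (L * ‖y - x‖) * ‖y - xp‖ :=
      mul_le_mul_of_nonneg_right (hlip y x) (norm_nonneg _)
    rw [inner_sub_left] at h1
    rw [show ‖y - x‖ = ‖x - y‖ from norm_sub_rev _ _,
        show ‖y - xp‖ = ‖xp - y‖ from norm_sub_rev _ _] at h2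
    rw [show ‖y - xp‖ = ‖xp - y‖ from norm_sub_rev _ _] at h1
    nlinarith [h1, h2]
  have hkey : ‖xp - y‖ ^ 2
      ≤ (α - s) / α * ⟪x - xp, y - xp⟫ + L * s * ‖xp - y‖ * ‖x - y‖ := by
    have h1 : α * ‖xp - y‖ ^ 2
        ≤ (α - s) * ⟪x - xp, y - xp⟫ + s * α * (L * ‖x - y‖ * ‖xp - y‖) := by
      nlinarith [hsum, mul_le_mul_of_nonneg_left hCS (mul_pos hs hα).le]
    have heq : α * ((α - s) / α * ⟪x - xp, y - xp⟫ + L * s * ‖xp - y‖ * ‖x - y‖)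
        = (α - s) * ⟪x - xp, y - xp⟫ + s * α * (L * ‖x - y‖ * ‖xp - y‖) := by
      field_simp
    refine (mul_le_mul_iff_right₀ hα).mp ?_
    rw [heq]
    exact h1
  have hc1 : ⟪x - xp, y - xp⟫ ≤ ‖xp - y‖ * ‖x - xp‖ := by
    have h := real_inner_le_norm (x - xp) (y - xp)
    rw [show ‖y - xp‖ = ‖xp - y‖ from norm_sub_rev _ _] at h
    nlinarith [h]
  have hc2 : -(‖xp - y‖ * ‖x - xp‖) ≤ ⟪x - xp, y - xp⟫ := by
    have h := abs_real_inner_le_norm (x - xp) (y - xp)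
    rw [show ‖y - xp‖ = ‖xp - y‖ from norm_sub_rev _ _] at h
    have h' := (abs_le.mp h).1
    nlinarith [h']
  have hA2 : ‖x - y‖ ^ 2 = ‖x - xp‖ ^ 2 + ‖xp - y‖ ^ 2 - 2 * ⟪x - xp, y - xp⟫ := by
    have hxy : x - y = (x - xp) - (y - xp) := by abel
    rw [hxy, norm_sub_sq_real, show ‖y - xp‖ = ‖xp - y‖ from norm_sub_rev _ _]
    ring
  have hm0 : 0 ≤ (α - s) / α := div_nonneg (by linarith) hα.le
  have hm1 : (α - s) / α < 1 := by rw [div_lt_one hα]; linarith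
  have hcore := scalar_core ((α - s) / α) (L * s) ‖xp - y‖ ‖x - y‖ ‖x - xp‖
    ⟪x - xp, y - xp⟫ hm0 hm1 (mul_pos hL hs) hsL (norm_nonneg _) (norm_nonneg _)
    (norm_nonneg _) hc1 hc2 hA2 hkey
  have h1r : (0:ℝ) < 1 - L * s := by linarith
  rw [← mul_le_mul_iff_left₀ h1r]
  calc ‖xp - y‖ * (1 - L * s) ≤ ((α - s) / α * (1 - L * s) + L * s) * ‖x - xp‖ := hcore
    _ = 1 / (1 - L * s) * ((α - s) / α * (1 - L * s) + L * s) * ‖x - xp‖ * (1 - L * s) := by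
        rw [show 1 / (1 - L * s) * ((α - s) / α * (1 - L * s) + L * s) * ‖x - xp‖ * (1 - L * s)
            = ((α - s) / α * (1 - L * s) + L * s) * ‖x - xp‖ * ((1 - L * s) / (1 - L * s)) by ring,
          div_self h1r.ne', mul_one]
    _ = (1 / (1 - L * s) - s / α) * ‖x - xp‖ * (1 - L * s) := by
        rw [show 1 / (1 - L * s) * ((α - s) / α * (1 - L * s) + L * s)
            = 1 / (1 - L * s) - s / α from by field_simp; ring]
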